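/- The polynomial f(z) = z_1 z_4 + z_1^{10} + z_2^5 + z_3^5 has Łojasiewicz exponent L(f) = 4, which is strictly less than min(max_i (d/w_i − 1), μ(f)) = min(10, 16) = 10 for its weighted homogeneous type (10; 1,2,2,9). Hence the Krasiński–Oleksik–Płoski formula fails in 4 variables. -/

import Mathlib

open MvPolynomial Filter

/-- The order of a tuple of power series: the minimum of the orders of the
components. -/
noncomputable def tupleOrder {m : ℕ} (ψ : Fin m → PowerSeries ℂ) : ℕ∞ :=
  ⨅ i, PowerSeries.order (ψ i)

/-- The set of ratios `ord(grad f ∘ φ) / ord(φ)` over all nonzero analytic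
paths `φ` with `φ(0) = 0`; the Łojasiewicz exponent `L(f)` is its supremum
(Lejeune–Teissier). -/
noncomputable def lojPathSet (n : ℕ) (f : MvPolynomial (Fin n) ℂ) : Set ℝ :=
  {r : ℝ | ∃ φ : Fin n → PowerSeries ℂ, φ ≠ 0 ∧
    (∀ i, PowerSeries.constantCoeff (φ i) = 0) ∧
    ∃ a b : ℕ, 0 < b ∧ tupleOrder φ = (b : ℕ∞) ∧
      tupleOrder (fun i => aeval φ (pderiv i f)) = (a : ℕ∞) ∧
      r = (a : ℝ) / (b : ℝ)}

/-- The polynomial `f = z₁z₄ + z₁¹⁰ + z₂⁵ + z₃⁵`, weak weighted homogeneous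
of type `(10; 1, 2, 2, 9)`, has Łojasiewicz exponent `L(f) = 4`, which is
strictly smaller than `min(maxᵢ(d/wᵢ − 1), μ(f)) = min(10, 16) = 10`: the
Krasiński–Oleksik–Płoski formula fails in 4 variables. -/

lemma order_pow' (φ : PowerSeries ℂ) (n : ℕ) : (φ ^ n).order = n * φ.order := by
  induction n with
  | zero => simp [PowerSeries.order_one]
  | succ n ih =>
    rw [pow_succ, PowerSeries.order_mul, ih]
    push_cast
    ring

lemma order_C' (c : ℂ) (hc : c ≠ 0) : (PowerSeries.C c).order = 0 := by
  apply le_antisymm _ zero_le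
  have := PowerSeries.order_le (φ := PowerSeries.C c) 0 (by simp [hc])
  simpa using this

lemma order_ofNat (n : ℕ) [n.AtLeastTwo] :
    (OfNat.ofNat n : PowerSeries ℂ).order = 0 := by
  have : (OfNat.ofNat n : PowerSeries ℂ) = PowerSeries.C (OfNat.ofNat n) :=
    (map_ofNat (PowerSeries.C) n).symm
  rw [this, order_C']
  exact NeZero.ne' _ |>.symm

lemma wh_pow {n : ℕ} {w : Fin n → ℕ} {p : MvPolynomial (Fin n) ℂ} {m : ℕ}
    (h : p.IsWeightedHomogeneous w m) (k : ℕ) :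
    (p ^ k).IsWeightedHomogeneous w (k * m) := by
  induction k with
  | zero => simpa using isWeightedHomogeneous_one ℂ w
  | succ k ih =>
    rw [pow_succ]
    have := ih.mul h
    convert this using 1
    ring

section main

noncomputable def fpoly : MvPolynomial (Fin 4) ℂ :=
  X 0 * X 3 + X 0 ^ 10 + X 1 ^ 5 + X 2 ^ 5

lemma fpoly_wh : fpoly.IsWeightedHomogeneous ![1, 2, 2, 9] 10 := by
  have h1 : (X 0 * X 3 : MvPolynomial (Fin 4) ℂ).IsWeightedHomogeneous ![1,2,2,9] 10 := by
    have := (isWeightedHomogeneous_X ℂ ![1,2,2,9] 0).mul (isWeightedHomogeneous_X ℂ ![1,2,2,9] 3)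
    simpa using this
  have h2 := wh_pow (isWeightedHomogeneous_X ℂ ![1,2,2,9] 0) 10
  have h3 := wh_pow (isWeightedHomogeneous_X ℂ ![1,2,2,9] 1) 5
  have h4 := wh_pow (isWeightedHomogeneous_X ℂ ![1,2,2,9] 2) 5
  simp only [Matrix.cons_val_zero, Matrix.cons_val_one, Matrix.head_cons,
    Matrix.cons_val_two, Matrix.tail_cons] at h2 h3 h4
  exact ((h1.add (by simpa using h2)).add (by simpa using h3)).add (by simpa using h4)

-- the witness path
noncomputable def ψ : Fin 4 → PowerSeries ℂ := ![0, PowerSeries.X, PowerSeries.X, 0]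

lemma grad0 (φ : Fin 4 → PowerSeries ℂ) : aeval φ (pderiv 0 fpoly) = φ 3 + 10 * φ 0 ^ 9 := by
  simp [fpoly, pderiv_X, Pi.single_apply]

lemma grad1 (φ : Fin 4 → PowerSeries ℂ) : aeval φ (pderiv 1 fpoly) = 5 * φ 1 ^ 4 := by
  simp [fpoly, pderiv_X, Pi.single_apply]

lemma grad2 (φ : Fin 4 → PowerSeries ℂ) : aeval φ (pderiv 2 fpoly) = 5 * φ 2 ^ 4 := by
  simp [fpoly, pderiv_X, Pi.single_apply]

lemma grad3 (φ : Fin 4 → PowerSeries ℂ) : aeval φ (pderiv 3 fpoly) = φ 0 := by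
  simp [fpoly, pderiv_X, Pi.single_apply]

lemma four_mem : (4 : ℝ) ∈ lojPathSet 4 fpoly := by
  refine ⟨ψ, ?_, ?_, 4, 1, one_pos, ?_, ?_, by norm_num⟩
  · intro h
    have := congrFun h 1
    simp [ψ, PowerSeries.X_ne_zero] at this
  · intro i
    fin_cases i <;> simp [ψ]
  · apply le_antisymm
    · have := iInf_le (fun i => PowerSeries.order (ψ i)) 1
      simpa [tupleOrder, ψ] using this
    · apply le_iInf
      intro i
      fin_cases i <;> simp [ψ]
  · apply le_antisymm
    · have := iInf_le (fun i => PowerSeries.order (aeval ψ (pderiv i fpoly))) 1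
      rw [grad1] at this
      have h5 : ((5 : PowerSeries ℂ) * ψ 1 ^ 4).order = 4 := by
        rw [PowerSeries.order_mul, order_pow', order_ofNat, zero_add]
        simp [ψ]
      rw [h5] at this
      simpa [tupleOrder] using this
    · apply le_iInf
      intro i
      fin_cases i
      · show (4:ℕ∞) ≤ (aeval ψ (pderiv 0 fpoly)).order
        rw [grad0]
        simp [ψ]
      · show (4:ℕ∞) ≤ (aeval ψ (pderiv 1 fpoly)).order
        rw [grad1, PowerSeries.order_mul, order_pow']
        simp [ψ, order_ofNat]
      · show (4:ℕ∞) ≤ (aeval ψ (pderiv 2 fpoly)).order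
        rw [grad2, PowerSeries.order_mul, order_pow']
        simp [ψ, order_ofNat]
      · show (4:ℕ∞) ≤ (aeval ψ (pderiv 3 fpoly)).order
        rw [grad3]
        simp [ψ]

lemma upper_bound : ∀ r ∈ lojPathSet 4 fpoly, r ≤ 4 := by
  rintro r ⟨φ, -, -, a, b, hb, hφb, hga, rfl⟩
  -- each order ≥ b, and some order = b
  have hge : ∀ i, (b : ℕ∞) ≤ PowerSeries.order (φ i) := by
    intro i
    rw [← hφb]
    exact iInf_le _ i
  have hattain : ∃ i, PowerSeries.order (φ i) = (b : ℕ∞) := by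
    by_contra h
    push_neg at h
    have h1 : ∀ i, ((b : ℕ∞) + 1) ≤ PowerSeries.order (φ i) := by
      intro i
      exact Order.add_one_le_of_lt (lt_of_le_of_ne (hge i) (Ne.symm (h i)))
    have h2 : ((b : ℕ∞) + 1) ≤ (b : ℕ∞) := by
      have := le_iInf h1
      rwa [show (⨅ i, PowerSeries.order (φ i)) = tupleOrder φ from rfl, hφb] at this
    have : (b : ℕ∞) < (b : ℕ∞) + 1 := by
      exact_mod_cast Nat.lt_succ_self b
    exact absurd (lt_of_lt_of_le this h2) (lt_irrefl _)
  have hale : ∀ i, (a : ℕ∞) ≤ PowerSeries.order (aeval φ (pderiv i fpoly)) := by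
    intro i
    rw [← hga]
    exact iInf_le _ i
  have key : (a : ℕ∞) ≤ ((4 * b : ℕ) : ℕ∞) := by
    obtain ⟨j, hj⟩ := hattain
    fin_cases j
    · have hj : (φ 0).order = (b:ℕ∞) := hj
      -- order φ 0 = b; use grad3 = φ 0
      calc (a : ℕ∞) ≤ _ := hale 3
        _ = (b : ℕ∞) := by rw [grad3, hj]
        _ ≤ _ := by exact_mod_cast Nat.le_mul_of_pos_left b (by norm_num)
    · have hj : (φ 1).order = (b:ℕ∞) := hj
      calc (a : ℕ∞) ≤ _ := hale 1
        _ = ((4 * b : ℕ) : ℕ∞) := by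
            rw [grad1, PowerSeries.order_mul, order_pow', order_ofNat, hj]
            push_cast; ring
    · have hj : (φ 2).order = (b:ℕ∞) := hj
      calc (a : ℕ∞) ≤ _ := hale 2
        _ = ((4 * b : ℕ) : ℕ∞) := by
            rw [grad2, PowerSeries.order_mul, order_pow', order_ofNat, hj]
            push_cast; ring
    · have hj : (φ 3).order = (b:ℕ∞) := hj
      -- order φ 3 = b; grad0 = φ 3 + 10 * φ 0 ^ 9
      have h9 : (b : ℕ∞) < ((10 : PowerSeries ℂ) * φ 0 ^ 9).order := by
        rw [PowerSeries.order_mul, order_pow', order_ofNat, zero_add]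
        calc (b : ℕ∞) < ((9 * b : ℕ) : ℕ∞) := by
              exact_mod_cast (by omega : b < 9 * b)
          _ ≤ 9 * (φ 0).order := by
              push_cast
              exact mul_le_mul_right (hge 0) 9
      have hsum : (φ 3 + (10 : PowerSeries ℂ) * φ 0 ^ 9).order = (b : ℕ∞) := by
        rw [PowerSeries.order_add_of_order_ne _ _ (by rw [hj]; exact (ne_of_lt h9))]
        rw [hj]
        exact min_eq_left (le_of_lt h9)
      calc (a : ℕ∞) ≤ _ := hale 0
        _ = (b : ℕ∞) := by rw [grad0, hsum]
        _ ≤ _ := by exact_mod_cast Nat.le_mul_of_pos_left b (by norm_num)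
  have hab : a ≤ 4 * b := by exact_mod_cast key
  rw [div_le_iff₀ (by exact_mod_cast hb)]
  calc (a : ℝ) ≤ ((4 * b : ℕ) : ℝ) := by exact_mod_cast hab
    _ = 4 * b := by push_cast; ring

end main

theorem loj_exponent_kop_counterexample :
    letI f : MvPolynomial (Fin 4) ℂ :=
      X 0 * X 3 + X 0 ^ 10 + X 1 ^ 5 + X 2 ^ 5
    f.IsWeightedHomogeneous ![1, 2, 2, 9] 10 ∧
    sSup (lojPathSet 4 f) = 4 ∧
    (4 : ℝ) < min (10 : ℝ) 16 ∧ min (10 : ℝ) 16 = 10 := by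
  refine ⟨fpoly_wh, ?_, by norm_num, by norm_num⟩
  exact IsGreatest.csSup_eq ⟨four_mem, upper_bound⟩
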